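/- Let G be a graph on n vertices with minimum degree δ ≥ 1, where n ≥ 3δ − 2. Then every maximum matching of G has size at least δ. -/

import Mathlib

open Finset

/-- Number of graph homomorphisms from the (loopless or looped) graph given by
relation `G` on `U` to the graph given by relation `H` on `V`. -/
def HomCount {U V : Type*} [Fintype U] [DecidableEq U] [Fintype V] [DecidableEq V]
    (G : U → U → Prop) [DecidableRel G] (H : V → V → Prop) [DecidableRel H] : ℕ :=
  Fintype.card {f : U → V // ∀ a b, G a b → H (f a) (f b)}

/-- Degree of a vertex in a graph with loops (a loop counts once). -/
def hdeg {V : Type*} [Fintype V] (H : V → V → Prop) [DecidableRel H] (v : V) : ℕ :=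
  (Finset.univ.filter (H v)).card

/-- Adjacency matrix (over ℝ) of the graph with loops given by `H`. -/
def adjMat {V : Type*} [Fintype V] (H : V → V → Prop) [DecidableRel H] : Matrix V V ℝ :=
  fun i j => if H i j then 1 else 0

/-- Adjacency relation of the cycle `C_k` on vertex set `Fin k` (for `k ≥ 3`). -/
def cycAdj (k : ℕ) (i j : Fin k) : Prop :=
  (i.val + 1) % k = j.val ∨ (j.val + 1) % k = i.val

instance (k : ℕ) : DecidableRel (cycAdj k) := fun i j => by
  unfold cycAdj; infer_instance

/-- Adjacency relation of the path `P_k` on vertex set `Fin k`. -/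
def pathAdj (k : ℕ) (i j : Fin k) : Prop :=
  i.val + 1 = j.val ∨ j.val + 1 = i.val

instance (k : ℕ) : DecidableRel (pathAdj k) := fun i j => by
  unfold pathAdj; infer_instance

/-- Adjacency relation of the star `K_{1,x-1}` on `Fin x`, with center `0`. -/
def starAdj (x : ℕ) (i j : Fin x) : Prop :=
  (i.val = 0 ∧ j.val ≠ 0) ∨ (j.val = 0 ∧ i.val ≠ 0)

instance (x : ℕ) : DecidableRel (starAdj x) := fun i j => by
  unfold starAdj; infer_instance

/-- `M` is a matching in the simple graph `G`: a set of edges of `G` that are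
pairwise vertex-disjoint. -/
def IsMatchingIn {U : Type*} (G : SimpleGraph U) (M : Finset (Sym2 U)) : Prop :=
  (∀ e ∈ M, e ∈ G.edgeSet) ∧
    ∀ e ∈ M, ∀ f ∈ M, e ≠ f → ∀ v : U, v ∈ e → v ∉ f

/-- `v` is unmatched by the matching `M` (not covered by any edge of `M`). -/
def UnmatchedBy {U : Type*} (M : Finset (Sym2 U)) (v : U) : Prop :=
  ∀ e ∈ M, v ∉ e

lemma unmatched_ne {U : Type*} {M : Finset (Sym2 U)} {u : U} (hu : UnmatchedBy M u)
    {e : Sym2 U} (he : e ∈ M) {v : U} (hv : v ∈ e) : u ≠ v := by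
  rintro rfl; exact hu e he hv

lemma matching_insert {U : Type*} [DecidableEq U] (G : SimpleGraph U) {M : Finset (Sym2 U)}
    (hM : IsMatchingIn G M) {u x : U} (hux : G.Adj u x)
    (hu : UnmatchedBy M u) (hx : UnmatchedBy M x) :
    IsMatchingIn G (insert s(u,x) M) := by
  obtain ⟨hE, hD⟩ := hM
  constructor
  · intro e he
    rcases Finset.mem_insert.mp he with rfl | he
    · exact hux
    · exact hE e he
  · intro e he f hf hef v hv
    rcases Finset.mem_insert.mp he with rfl | he
    · rcases Finset.mem_insert.mp hf with rfl | hf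
      · exact absurd rfl hef
      · rcases Sym2.mem_iff.mp hv with h1 | h1 <;> rw [h1]
        · exact hu f hf
        · exact hx f hf
    · rcases Finset.mem_insert.mp hf with rfl | hf
      · intro hvf
        rcases Sym2.mem_iff.mp hvf with h1 | h1 <;> rw [h1] at hv
        · exact hu e he hv
        · exact hx e he hv
      · exact hD e he f hf hef v hv

lemma matching_augment {U : Type*} [DecidableEq U] (G : SimpleGraph U) {M : Finset (Sym2 U)}
    (hM : IsMatchingIn G M) {u v x y : U}
    (he : s(x,y) ∈ M) (hux : G.Adj u x) (hvy : G.Adj v y)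
    (huv : u ≠ v) (hu : UnmatchedBy M u) (hv : UnmatchedBy M v) :
    IsMatchingIn G (insert s(u,x) (insert s(v,y) (M.erase s(x,y)))) := by
  obtain ⟨hE, hD⟩ := hM
  have hxy : G.Adj x y := hE _ he
  have huy : u ≠ y := unmatched_ne hu he (by simp)
  have hvx : v ≠ x := unmatched_ne hv he (by simp)
  have hgx : ∀ g ∈ M.erase s(x,y), x ∉ g := fun g hg =>
    hD _ he g (Finset.mem_of_mem_erase hg) (Ne.symm (Finset.mem_erase.mp hg).1) x (by simp)
  have hgy : ∀ g ∈ M.erase s(x,y), y ∉ g := fun g hg =>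
    hD _ he g (Finset.mem_of_mem_erase hg) (Ne.symm (Finset.mem_erase.mp hg).1) y (by simp)
  have hgu : ∀ g ∈ M.erase s(x,y), u ∉ g := fun g hg => hu g (Finset.mem_of_mem_erase hg)
  have hgv : ∀ g ∈ M.erase s(x,y), v ∉ g := fun g hg => hv g (Finset.mem_of_mem_erase hg)
  constructor
  · intro e he'
    rcases Finset.mem_insert.mp he' with rfl | he'
    · exact hux
    rcases Finset.mem_insert.mp he' with rfl | he'
    · exact hvy
    · exact hE e (Finset.mem_of_mem_erase he')
  · intro e he' f hf' hef w hwe hwf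
    simp only [Finset.mem_insert] at he' hf'
    rcases he' with rfl | rfl | he' <;> rcases hf' with rfl | rfl | hf'
    · exact hef rfl
    · rcases Sym2.mem_iff.mp hwe with rfl | rfl <;> rcases Sym2.mem_iff.mp hwf with rfl | rfl
      · exact huv rfl
      · exact huy rfl
      · exact hvx.symm rfl  -- w = x and w = v : x = v? order
      · exact hxy.ne rfl
    · rcases Sym2.mem_iff.mp hwe with rfl | rfl
      · exact hgu f hf' hwf
      · exact hgx f hf' hwf
    · rcases Sym2.mem_iff.mp hwe with rfl | rfl <;> rcases Sym2.mem_iff.mp hwf with rfl | rfl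
      · exact huv.symm rfl
      · exact hvx rfl
      · exact huy.symm rfl
      · exact hxy.ne.symm rfl
    · exact hef rfl
    · rcases Sym2.mem_iff.mp hwe with rfl | rfl
      · exact hgv f hf' hwf
      · exact hgy f hf' hwf
    · rcases Sym2.mem_iff.mp hwf with rfl | rfl
      · exact hgu e he' hwe
      · exact hgx e he' hwe
    · rcases Sym2.mem_iff.mp hwf with rfl | rfl
      · exact hgv e he' hwe
      · exact hgy e he' hwe
    · exact hD e (Finset.mem_of_mem_erase he') f (Finset.mem_of_mem_erase hf') hef w hwe hwf

/-- if `G` has `n` vertices, minimum degree `δ ≥ 1`, and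
`n ≥ 3δ − 2`, then every maximum matching of `G` has size at least `δ`. -/
theorem maximum_matching_size_ge_min_degree {U : Type*} [Fintype U] [DecidableEq U]
    (G : SimpleGraph U) [DecidableRel G.Adj]
    (δ : ℕ) (hδ : 1 ≤ δ) (hdegG : ∀ v : U, δ ≤ G.degree v)
    (hn : 3 * δ ≤ Fintype.card U + 2)
    (M : Finset (Sym2 U)) (hM : IsMatchingIn G M)
    (hmax : ∀ M' : Finset (Sym2 U), IsMatchingIn G M' → M'.card ≤ M.card) :
    δ ≤ M.card := by
  classical
  by_contra hlt
  push_neg at hlt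
  set I : Finset U := univ.filter (fun v => UnmatchedBy M v) with hIdef
  set C : Finset U := univ.filter (fun v => ∃ e ∈ M, v ∈ e) with hCdef
  have hmemI : ∀ v, v ∈ I ↔ UnmatchedBy M v := by
    intro v; simp [hIdef]
  have hmemC : ∀ v, v ∈ C ↔ ∃ e ∈ M, v ∈ e := by
    intro v; simp [hCdef]
  -- card C ≤ 2 * M.card
  have hCsub : C ⊆ M.biUnion (fun e => univ.filter (· ∈ e)) := by
    intro v hv
    obtain ⟨e, he, hve⟩ := (hmemC v).mp hv
    exact Finset.mem_biUnion.mpr ⟨e, he, by simp [hve]⟩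
  have hCcard : C.card ≤ 2 * M.card := by
    calc C.card ≤ (M.biUnion (fun e => univ.filter (· ∈ e))).card := Finset.card_le_card hCsub
    _ ≤ ∑ e ∈ M, (univ.filter (· ∈ e)).card := Finset.card_biUnion_le
    _ ≤ ∑ e ∈ M, 2 := by
        refine Finset.sum_le_sum fun e _ => ?_
        induction e using Sym2.ind with
        | _ a b =>
          refine le_trans (Finset.card_le_card (fun v hv => ?_)) (Finset.card_insert_le a {b} |>.trans (by simp))
          simp only [Finset.mem_filter] at hv
          rcases Sym2.mem_iff.mp hv.2 with rfl | rfl <;> simp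
    _ = 2 * M.card := by rw [Finset.sum_const, smul_eq_mul, mul_comm]
  -- card I + card C = n
  have hIC : I.card + C.card = Fintype.card U := by
    have key := Finset.card_filter_add_card_filter_not
      (s := (univ : Finset U)) (p := fun v => UnmatchedBy M v)
    have hCeq : (univ.filter (fun v => ¬ UnmatchedBy M v)) = C := by
      rw [hCdef]
      apply Finset.filter_congr
      intro v _
      unfold UnmatchedBy
      push_neg
      rfl
    rw [hCeq, Finset.card_univ, ← hIdef] at key
    omega
  have hIcard : δ ≤ I.card := by omega
  -- neighbors of unmatched vertices are covered
  have hNC : ∀ u ∈ I, ∀ x, G.Adj u x → x ∈ C := by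
    intro u hu x hux
    by_contra hx
    have hxu : UnmatchedBy M x := by
      intro e he hxe
      exact hx ((hmemC x).mpr ⟨e, he, hxe⟩)
    have hu' := (hmemI u).mp hu
    have hM' := matching_insert G hM hux hu' hxu
    have hnot : s(u,x) ∉ M := fun h => hu' _ h (by simp)
    have := hmax _ hM'
    rw [Finset.card_insert_of_notMem hnot] at this
    omega
  set X : Finset (U × U) := (I ×ˢ C).filter (fun p => G.Adj p.1 p.2) with hXdef
  -- lower bound
  have hXlow : δ * I.card ≤ X.card := by
    have hfib : ∀ p ∈ X, p.1 ∈ I := by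
      intro p hp
      simp only [hXdef, Finset.mem_filter, Finset.mem_product] at hp
      exact hp.1.1
    rw [Finset.card_eq_sum_card_fiberwise hfib]
    calc δ * I.card = ∑ _u ∈ I, δ := by rw [Finset.sum_const, smul_eq_mul, mul_comm]
      _ ≤ ∑ u ∈ I, (X.filter (fun p => p.1 = u)).card := by
          refine Finset.sum_le_sum fun u hu => ?_
          have hdeg : δ ≤ (G.neighborFinset u).card := by
            rw [G.card_neighborFinset_eq_degree]; exact hdegG u
          refine le_trans hdeg (Finset.card_le_card_of_injOn (fun x => (u, x)) ?_ ?_)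
          · intro x hx
            rw [Finset.mem_coe, SimpleGraph.mem_neighborFinset] at hx
            simp only [Finset.mem_coe, hXdef, Finset.mem_filter, Finset.mem_product]
            exact ⟨⟨⟨hu, hNC u hu x hx⟩, hx⟩, trivial⟩
          · intro a _ b _ h
            exact congrArg Prod.snd h
  -- per-edge upper bound
  have key : ∀ e ∈ M, (X.filter (fun p => p.2 ∈ e)).card ≤ I.card := by
    intro e he
    have hM1 : 0 < M.card := Finset.card_pos.mpr ⟨e, he⟩
    have h2I : 2 ≤ I.card := le_trans (by omega) hIcard
    revert he
    induction e using Sym2.ind with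
    | _ x y =>
    intro he
    set A := I.filter (fun u => G.Adj u x) with hA
    set B := I.filter (fun u => G.Adj u y) with hB
    have hsub : X.filter (fun p => p.2 ∈ s(x,y)) ⊆ A ×ˢ {x} ∪ B ×ˢ {y} := by
      intro p hp
      simp only [hXdef, Finset.mem_filter, Finset.mem_product] at hp
      obtain ⟨⟨⟨hpI, hpC⟩, hadj⟩, hpe⟩ := hp
      rcases Sym2.mem_iff.mp hpe with h | h
      · apply Finset.mem_union_left
        simp only [Finset.mem_product, hA, Finset.mem_filter, Finset.mem_singleton]
        exact ⟨⟨hpI, h ▸ hadj⟩, h⟩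
      · apply Finset.mem_union_right
        simp only [Finset.mem_product, hB, Finset.mem_filter, Finset.mem_singleton]
        exact ⟨⟨hpI, h ▸ hadj⟩, h⟩
    have hcard : (X.filter (fun p => p.2 ∈ s(x,y))).card ≤ A.card + B.card := by
      refine le_trans (Finset.card_le_card hsub) (le_trans (Finset.card_union_le _ _) ?_)
      rw [Finset.card_product, Finset.card_product]
      simp
    have haug : ∀ u ∈ A, ∀ v ∈ B, u = v := by
      intro u hu v hv
      by_contra huv
      obtain ⟨huI, hux⟩ := Finset.mem_filter.mp hu
      obtain ⟨hvI, hvy⟩ := Finset.mem_filter.mp hv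
      have hu' := (hmemI u).mp huI
      have hv' := (hmemI v).mp hvI
      have hM' := matching_augment G hM he hux hvy huv hu' hv'
      have h1 : s(v,y) ∉ M.erase s(x,y) := fun h =>
        hv' _ (Finset.mem_of_mem_erase h) (by simp)
      have h2 : s(u,x) ∉ insert s(v,y) (M.erase s(x,y)) := by
        intro h
        rcases Finset.mem_insert.mp h with h' | h'
        · rcases Sym2.eq_iff.mp h' with ⟨ha, hb⟩ | ⟨ha, hb⟩
          · exact huv ha
          · exact unmatched_ne hu' he (Sym2.mem_iff.mpr (Or.inr rfl)) ha
        · exact hu' _ (Finset.mem_of_mem_erase h') (by simp)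
      have := hmax _ hM'
      rw [Finset.card_insert_of_notMem h2, Finset.card_insert_of_notMem h1,
          Finset.card_erase_of_mem he] at this
      omega
    rcases Finset.eq_empty_or_nonempty A with hAe | ⟨a, ha⟩
    · rw [hAe, Finset.card_empty, Nat.zero_add] at hcard
      exact le_trans hcard (Finset.card_le_card (by rw [hB]; exact Finset.filter_subset _ _))
    rcases Finset.eq_empty_or_nonempty B with hBe | ⟨b, hb⟩
    · rw [hBe, Finset.card_empty, Nat.add_zero] at hcard
      exact le_trans hcard (Finset.card_le_card (by rw [hA]; exact Finset.filter_subset _ _))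
    · have hA1 : A ⊆ {b} := fun a' ha' => Finset.mem_singleton.mpr (haug a' ha' b hb)
      have hB1 : B ⊆ {a} := fun b' hb' => Finset.mem_singleton.mpr (haug a ha b' hb').symm
      have : A.card + B.card ≤ 2 := by
        have h1 := Finset.card_le_card hA1
        have h2 := Finset.card_le_card hB1
        simp only [Finset.card_singleton] at h1 h2
        omega
      omega
  -- upper bound
  have hXup : X.card ≤ M.card * I.card := by
    have hsub : X ⊆ M.biUnion (fun e => X.filter (fun p => p.2 ∈ e)) := by
      intro p hp
      have hp' := hp
      simp only [hXdef, Finset.mem_filter, Finset.mem_product] at hp'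
      obtain ⟨e, he, hpe⟩ := (hmemC p.2).mp hp'.1.2
      exact Finset.mem_biUnion.mpr ⟨e, he, Finset.mem_filter.mpr ⟨hp, hpe⟩⟩
    calc X.card ≤ ∑ e ∈ M, (X.filter (fun p => p.2 ∈ e)).card :=
          le_trans (Finset.card_le_card hsub) Finset.card_biUnion_le
      _ ≤ ∑ _e ∈ M, I.card := Finset.sum_le_sum key
      _ = M.card * I.card := by rw [Finset.sum_const, smul_eq_mul]
  have hfin : δ ≤ M.card :=
    Nat.le_of_mul_le_mul_right (le_trans hXlow hXup |>.trans_eq (by ring_nf) |>.trans_eq rfl |> fun h => h)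
      (by omega)
  omega
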